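/- Every entire function of genus zero of the form f(z) = z^q ∏_{n=1}^∞ (1 − z/γ_n) with ∑ |γ_n|^{-1} < ∞ satisfies the Gauss-Lucas relation: every zero of f' lies in the closure of the convex hull of the zeros of f. -/

import Mathlib

open Filter Finset
open scoped Topology


lemma glgz_prod_est (ε : ℕ → ℂ) (s : Finset ℕ) :
    ‖(∏ i ∈ s, (1 + ε i)) - 1‖ ≤ Real.exp (∑ i ∈ s, ‖ε i‖) - 1 := by
  induction s using Finset.cons_induction with
  | empty => simp
  | cons a s ha ih =>
    rw [Finset.prod_cons, Finset.sum_cons]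
    set P := ∏ i ∈ s, (1 + ε i)
    set E := Real.exp (∑ i ∈ s, ‖ε i‖) with hE
    have hE1 : (1:ℝ) ≤ E := Real.one_le_exp (Finset.sum_nonneg fun i _ => norm_nonneg _)
    have hP : ‖P‖ ≤ E := by
      calc ‖P‖ = ‖(P - 1) + 1‖ := by ring_nf
        _ ≤ ‖P - 1‖ + 1 := by simpa using norm_add_le (P - 1) 1
        _ ≤ (E - 1) + 1 := by linarith
        _ = E := by ring
    have h2 : (1 + ε a) * P - 1 = (P - 1) + ε a * P := by ring
    calc ‖(1 + ε a) * P - 1‖ = ‖(P - 1) + ε a * P‖ := by rw [h2]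
      _ ≤ ‖P - 1‖ + ‖ε a‖ * ‖P‖ := by
          refine (norm_add_le _ _).trans ?_; rw [norm_mul]
      _ ≤ (E - 1) + ‖ε a‖ * E := by
          have := mul_le_mul_of_nonneg_left hP (norm_nonneg (ε a)); linarith
      _ ≤ Real.exp (‖ε a‖ + ∑ i ∈ s, ‖ε i‖) - 1 := by
          rw [Real.exp_add, ← hE]
          nlinarith [Real.add_one_le_exp ‖ε a‖, norm_nonneg (ε a)]


lemma glgz_hasProd_zero {g : ℕ → ℂ} (m : ℕ) (h : g m = 0) : HasProd g 0 := by
  have hev : ∀ᶠ (s : Finset ℕ) in atTop, (0:ℂ) = ∏ n ∈ s, g n := by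
    filter_upwards [eventually_ge_atTop {m}] with s hs
    exact (Finset.prod_eq_zero (hs (Finset.mem_singleton_self m)) h).symm
  exact Tendsto.congr' hev tendsto_const_nhds

lemma glgz_norm_top (γ : ℕ → ℂ) (hγ : ∀ n, γ n ≠ 0)
    (hgenus : Summable (fun n => 1 / ‖γ n‖)) :
    Tendsto (fun n => ‖γ n‖) atTop atTop := by
  have h0 : Tendsto (fun n => 1 / ‖γ n‖) atTop (𝓝 0) := hgenus.tendsto_atTop_zero
  have h1 : Tendsto (fun n => 1 / ‖γ n‖) atTop (𝓝[>] 0) := by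
    rw [tendsto_nhdsWithin_iff]
    refine ⟨h0, Eventually.of_forall fun n => ?_⟩
    have h2 : (0:ℝ) < ‖γ n‖ := norm_pos_iff.2 (hγ n)
    exact Set.mem_setOf.2 (by positivity)
  have := h1.inv_tendsto_nhdsGT_zero
  simpa [Pi.inv_def, one_div] using this

lemma glgz_tendsto_prod (γ : ℕ → ℂ) (hγ : ∀ n, γ n ≠ 0)
    (hgenus : Summable (fun n => 1 / ‖γ n‖)) (z : ℂ) :
    Tendsto (fun N => ∏ n ∈ Finset.range N, (1 - z / γ n)) atTop
      (𝓝 (∏' n, (1 - z / γ n))) := by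
  by_cases hz : ∃ m, z = γ m
  · obtain ⟨m, rfl⟩ := hz
    have hfac : (1 : ℂ) - γ m / γ m = 0 := by
      rw [div_self (hγ m), sub_self]
    have h0 : HasProd (fun n => 1 - γ m / γ n) 0 := glgz_hasProd_zero m hfac
    rw [h0.tprod_eq]
    have hev : ∀ᶠ N in atTop, (0:ℂ) = ∏ n ∈ Finset.range N, (1 - γ m / γ n) := by
      filter_upwards [eventually_ge_atTop (m+1)] with N hN
      exact (Finset.prod_eq_zero (Finset.mem_range.2 hN) hfac).symm
    exact Tendsto.congr' hev tendsto_const_nhds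
  · push_neg at hz
    have hne : ∀ n, (1:ℂ) - z / γ n ≠ 0 := by
      intro n h
      have : z / γ n = 1 := by linear_combination -h
      exact hz n ((div_eq_one_iff_eq (hγ n)).1 this)
    have hlog : Summable (fun n => Complex.log (1 - z / γ n)) := by
      have hbig : ∀ᶠ n in atTop, ‖γ n‖ ≥ 2 * ‖z‖ + 1 :=
        (glgz_norm_top γ hγ hgenus).eventually_ge_atTop _
      refine Summable.of_norm_bounded_eventually (g := fun n => (3/2) * (‖z‖ * (1/‖γ n‖)))
        (hgenus.mul_left _ |>.mul_left _) ?_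
      rw [Nat.cofinite_eq_atTop]
      filter_upwards [hbig] with n hn
      have hγpos : (0:ℝ) < ‖γ n‖ := norm_pos_iff.2 (hγ n)
      have hsmall : ‖-(z / γ n)‖ ≤ 1/2 := by
        rw [norm_neg, norm_div]
        rw [div_le_iff₀ hγpos]
        nlinarith [norm_nonneg z]
      have := Complex.norm_log_one_add_half_le_self hsmall
      have heq : (1:ℂ) + -(z / γ n) = 1 - z / γ n := by ring
      rw [heq] at this
      refine this.trans ?_
      rw [norm_neg, norm_div]
      apply le_of_eq
      field_simp
    have hmul : Multipliable (fun n => (1:ℂ) - z / γ n) :=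
      Complex.multipliable_of_summable_log hlog
    exact hmul.hasProd.tendsto_prod_nat

theorem gauss_lucas_genus_zero (q : ℕ) (γ : ℕ → ℂ)
    (hγ : ∀ n, γ n ≠ 0)
    (hgenus : Summable (fun n => 1 / ‖γ n‖))
    (f : ℂ → ℂ) (hf : ∀ z, f z = z ^ q * ∏' n, (1 - z / γ n))
    (w : ℂ) (hw : deriv f w = 0) :
    w ∈ closure (convexHull ℝ {z : ℂ | f z = 0}) := by
  set S : Set ℂ := {z : ℂ | f z = 0} with hS
  by_contra hcl
  -- zeros of f
  have hγS : ∀ n, γ n ∈ S := by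
    intro n
    have hfac : (1 : ℂ) - γ n / γ n = 0 := by rw [div_self (hγ n), sub_self]
    have h0 : HasProd (fun k => 1 - γ n / γ k) 0 := glgz_hasProd_zero n hfac
    show f (γ n) = 0
    rw [hf, h0.tprod_eq, mul_zero]
  have h0S : q ≠ 0 → (0 : ℂ) ∈ S := by
    intro hq
    show f 0 = 0
    rw [hf, zero_pow hq, zero_mul]
  have hmemS : ∀ a ∈ S, a ∈ closure (convexHull ℝ S) :=
    fun a ha => subset_closure (subset_convexHull ℝ S ha)
  have hwS : f w ≠ 0 := fun h => hcl (hmemS w h)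
  have hwγ : ∀ n, w ≠ γ n := fun n h => hcl (h ▸ hmemS _ (hγS n))
  have hw0 : q ≠ 0 → w ≠ 0 := fun hq h => hcl (h ▸ hmemS _ (h0S hq))
  -- separation
  obtain ⟨ℓ, c, hc1, hc2⟩ := geometric_hahn_banach_closed_point
    ((convex_convexHull ℝ S).closure) isClosed_closure hcl
  have hSsep : ∀ a ∈ S, ℓ a < ℓ w := fun a ha => (hc1 a (hmemS a ha)).trans hc2
  -- representation of ℓ
  set u : ℂ := (ℓ 1 : ℂ) - (ℓ Complex.I : ℂ) * Complex.I with hu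
  have hℓ : ∀ v : ℂ, ℓ v = (u * v).re := by
    intro v
    have hv : v = (v.re : ℝ) • (1 : ℂ) + (v.im : ℝ) • Complex.I := by
      simp [Complex.real_smul, Complex.re_add_im]
    rw [hv]
    rw [map_add, map_smul, map_smul]
    simp [hu, Complex.mul_re, Complex.add_re, Complex.add_im, smul_eq_mul]
    ring
  -- the positive functional
  set Ψ : ℂ →ₗ[ℝ] ℝ := Complex.reLm.comp ((LinearMap.mulLeft ℝ ((starRingEnd ℂ) u)).restrictScalars ℝ) with hΨ
  have hΨapp : ∀ v : ℂ, Ψ v = ((starRingEnd ℂ) u * v).re := fun v => rfl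
  have hΨpos : ∀ a ∈ S, 0 < Ψ ((w - a)⁻¹) := by
    intro a ha
    have haw : w - a ≠ 0 := sub_ne_zero.2 (fun h => (lt_irrefl _ (h ▸ hSsep a ha)))
    have hns : (0:ℝ) < Complex.normSq (w - a) := Complex.normSq_pos.2 haw
    have hkey : Ψ ((w - a)⁻¹) = (u * (w - a)).re / Complex.normSq (w - a) := by
      rw [hΨapp, Complex.inv_def]
      rw [← mul_assoc, ← map_mul]
      simp [Complex.mul_re, Complex.ofReal_inv]
      field_simp
      ring
    rw [hkey]
    apply div_pos _ hns
    have : (u * (w - a)).re = ℓ w - ℓ a := by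
      rw [← hℓ, map_sub]
    rw [this]
    linarith [hSsep a ha]
  have hΨcont : Continuous fun v : ℂ => Ψ v := by
    simp only [hΨapp]
    exact Complex.continuous_re.comp (continuous_const.mul continuous_id)
  -- the approximating polynomials
  set R : ℝ := ‖w‖ + 2 with hR
  have hRpos : (0:ℝ) < R := by positivity
  set U : Set ℂ := Metric.ball w 1 with hU
  have hwU : w ∈ U := Metric.mem_ball_self one_pos
  set F : ℕ → ℂ → ℂ := fun N z => z ^ q * ∏ n ∈ Finset.range N, (1 - z / γ n) with hF
  set g : ℕ → ℝ := fun n => R / ‖γ n‖ with hg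
  have hg0 : ∀ n, 0 ≤ g n := fun n => by positivity
  have hgsum : Summable g := by
    have := hgenus.mul_left R
    simpa [hg, div_eq_mul_inv, one_div] using this
  set A : ℝ := ∑' n, g n with hA
  have hsle : ∀ N, ∑ n ∈ Finset.range N, g n ≤ A :=
    fun N => hgsum.sum_le_tsum _ (fun i _ => hg0 i)
  have hstend : Tendsto (fun N => ∑ n ∈ Finset.range N, g n) atTop (𝓝 A) :=
    hgsum.hasSum.tendsto_sum_nat
  have hzR : ∀ z ∈ U, ‖z‖ ≤ R := by
    intro z hz
    have := mem_ball_iff_norm.1 hz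
    calc ‖z‖ = ‖w + (z - w)‖ := by ring_nf
      _ ≤ ‖w‖ + ‖z - w‖ := norm_add_le _ _
      _ ≤ R := by rw [hR]; linarith
  have hzg : ∀ z ∈ U, ∀ n, ‖z / γ n‖ ≤ g n := by
    intro z hz n
    have hγpos : (0:ℝ) < ‖γ n‖ := norm_pos_iff.2 (hγ n)
    rw [norm_div]
    show ‖z‖ / ‖γ n‖ ≤ R / ‖γ n‖
    gcongr
    exact hzR z hz
  set C : ℝ := R ^ q * Real.exp A with hC
  have hCpos : 0 < C := by positivity
  have hFbound : ∀ N, ∀ z ∈ U, ‖F N z‖ ≤ C := by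
    intro N z hz
    rw [hF]
    simp only [norm_mul, norm_pow, norm_prod]
    have h1 : ‖z‖ ^ q ≤ R ^ q := pow_le_pow_left₀ (norm_nonneg z) (hzR z hz) q
    have h2 : ∏ n ∈ Finset.range N, ‖1 - z / γ n‖ ≤ Real.exp A := by
      calc ∏ n ∈ Finset.range N, ‖1 - z / γ n‖
          ≤ ∏ n ∈ Finset.range N, Real.exp (g n) := by
            apply Finset.prod_le_prod (fun i _ => norm_nonneg _)
            intro i _
            calc ‖1 - z / γ i‖ ≤ ‖(1:ℂ)‖ + ‖z / γ i‖ := norm_sub_le _ _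
              _ = 1 + ‖z / γ i‖ := by rw [norm_one]
              _ ≤ 1 + g i := by linarith [hzg z hz i]
              _ ≤ Real.exp (g i) := by
                  linarith [Real.add_one_le_exp (g i)]
        _ = Real.exp (∑ n ∈ Finset.range N, g n) := by rw [Real.exp_sum]
        _ ≤ Real.exp A := Real.exp_le_exp.2 (hsle N)
    calc ‖z‖ ^ q * ∏ n ∈ Finset.range N, ‖1 - z / γ n‖
        ≤ R ^ q * Real.exp A := by
          apply mul_le_mul h1 h2 (Finset.prod_nonneg fun i _ => norm_nonneg _)
          positivity
      _ = C := hC.symm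
  have hdiff : ∀ N, Differentiable ℂ (F N) := by
    intro N
    apply Differentiable.mul (differentiable_pow q)
    apply Differentiable.fun_finsetProd
    intro i _
    exact (differentiable_const _).sub (differentiable_id.div_const _)
  -- uniform Cauchy
  have hcauchy : UniformCauchySeqOn F atTop U := by
    rw [Metric.uniformCauchySeqOn_iff]
    intro ε hε
    have htend0 : Tendsto (fun N => C * (Real.exp (A - ∑ n ∈ Finset.range N, g n) - 1))
        atTop (𝓝 0) := by
      have h1 : Tendsto (fun N => A - ∑ n ∈ Finset.range N, g n) atTop (𝓝 0) := by
        simpa using (tendsto_const_nhds (x := A)).sub hstend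
      have h2 := (Real.continuous_exp.tendsto 0).comp h1
      simp only [Real.exp_zero] at h2
      have h3 : Tendsto (fun N => Real.exp (A - ∑ n ∈ Finset.range N, g n) - 1)
          atTop (𝓝 0) := by simpa using h2.sub (tendsto_const_nhds (x := (1:ℝ)))
      simpa using h3.const_mul C
    obtain ⟨N₀, hN₀⟩ := (htend0.eventually (gt_mem_nhds hε)).exists
    have key : ∀ m n, N₀ ≤ n → n ≤ m → ∀ z ∈ U, dist (F m z) (F n z) < ε := by
      intro m n hn hnm z hz
      have hsub : Finset.range n ⊆ Finset.range m := Finset.range_subset_range.2 hnm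
      have hsplit : F m z - F n z
          = F n z * ((∏ i ∈ Finset.range m \ Finset.range n, (1 + -(z / γ i))) - 1) := by
        simp only [hF]
        rw [← Finset.prod_sdiff hsub]
        have : ∀ i, (1 : ℂ) + -(z / γ i) = 1 - z / γ i := fun i => by ring
        simp only [this]
        ring
      rw [dist_eq_norm, hsplit, norm_mul]
      have h1 : ‖(∏ i ∈ Finset.range m \ Finset.range n, (1 + -(z / γ i))) - 1‖
          ≤ Real.exp (A - ∑ k ∈ Finset.range N₀, g k) - 1 := by
        refine (glgz_prod_est _ _).trans ?_
        have hs1 : ∑ i ∈ Finset.range m \ Finset.range n, ‖-(z / γ i)‖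
            ≤ ∑ i ∈ Finset.range m \ Finset.range n, g i := by
          apply Finset.sum_le_sum
          intro i _
          rw [norm_neg]
          exact hzg z hz i
        have hs2 : ∑ i ∈ Finset.range m \ Finset.range n, g i
            ≤ A - ∑ k ∈ Finset.range N₀, g k := by
          rw [Finset.sum_sdiff_eq_sub hsub]
          have h3 : ∑ k ∈ Finset.range N₀, g k ≤ ∑ k ∈ Finset.range n, g k :=
            Finset.sum_le_sum_of_subset_of_nonneg (Finset.range_subset_range.2 hn)
              (fun i _ _ => hg0 i)
          linarith [hsle m]
        gcongr
        linarith
      calc ‖F n z‖ * ‖(∏ i ∈ Finset.range m \ Finset.range n, (1 + -(z / γ i))) - 1‖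
          ≤ C * (Real.exp (A - ∑ k ∈ Finset.range N₀, g k) - 1) := by
            apply mul_le_mul (hFbound n z hz) h1 (norm_nonneg _) (le_of_lt hCpos)
        _ < ε := hN₀
    refine ⟨N₀, fun m hm n hn z hz => ?_⟩
    rcases le_total n m with h | h
    · exact key m n hn h z hz
    · rw [dist_comm]; exact key n m hm h z hz
  -- pointwise convergence and uniform convergence
  have hpt : ∀ z ∈ U, Tendsto (fun N => F N z) atTop (𝓝 (f z)) := by
    intro z _
    rw [hf]
    exact (glgz_tendsto_prod γ hγ hgenus z).const_mul _
  have hunif : TendstoUniformlyOn F f atTop U :=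
    hcauchy.tendstoUniformlyOn_of_tendsto hpt
  have hderivtend : Tendsto (fun N => deriv (F N) w) atTop (𝓝 (deriv f w)) := by
    have hloc := hunif.tendstoLocallyUniformlyOn.deriv
      (Eventually.of_forall fun N => (hdiff N).differentiableOn)
      Metric.isOpen_ball
    exact hloc.tendsto_at hwU
  have hFw : Tendsto (fun N => F N w) atTop (𝓝 (f w)) := hpt w hwU
  -- nonvanishing of F N w
  have hwpow : w ^ q ≠ 0 := by
    rcases Nat.eq_zero_or_pos q with hq | hq
    · rw [hq, pow_zero]; exact one_ne_zero
    · exact pow_ne_zero q (hw0 hq.ne')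
  have hfacne : ∀ n, (1:ℂ) - w / γ n ≠ 0 := by
    intro n h
    have : w / γ n = 1 := by linear_combination -h
    exact hwγ n ((div_eq_one_iff_eq (hγ n)).1 this)
  have hFNw : ∀ N, F N w ≠ 0 := by
    intro N
    apply mul_ne_zero hwpow
    exact Finset.prod_ne_zero_iff.2 fun i _ => hfacne i
  -- log derivative formula
  have hlogF : ∀ N, logDeriv (F N) w
      = (q : ℂ) / w + ∑ n ∈ Finset.range N, (w - γ n)⁻¹ := by
    intro N
    have hdf : ∀ i : ℕ, DifferentiableAt ℂ (fun z : ℂ => 1 - z / γ i) w :=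
      fun i => ((differentiable_const _).sub (differentiable_id.div_const _)).differentiableAt
    have h1 := logDeriv_mul (f := fun z : ℂ => z ^ q)
      (g := fun z : ℂ => ∏ n ∈ Finset.range N, (1 - z / γ n)) w hwpow
      (Finset.prod_ne_zero_iff.2 fun i _ => hfacne i)
      ((differentiable_pow q).differentiableAt)
      ((DifferentiableAt.fun_finsetProd fun i _ => hdf i))
    have h2 := logDeriv_prod (s := Finset.range N) (f := fun n (z : ℂ) => 1 - z / γ n) (x := w)
      (fun i _ => hfacne i) (fun i _ => hdf i)
    beta_reduce at h2
    have h3 : ∀ n : ℕ, logDeriv (fun z : ℂ => 1 - z / γ n) w = (w - γ n)⁻¹ := by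
      intro n
      have hda : HasDerivAt (fun z : ℂ => 1 - z / γ n) (-(γ n)⁻¹) w := by
        simpa using ((hasDerivAt_id w).div_const (γ n)).const_sub 1
      rw [logDeriv_apply, hda.deriv]
      have hwn : w - γ n ≠ 0 := sub_ne_zero.2 (hwγ n)
      have hγn := hγ n
      have hfn := hfacne n
      field_simp
      rw [← neg_div, neg_sub]; exact div_self (sub_ne_zero.2 (Ne.symm (hwγ n)))
    calc logDeriv (F N) w
        = logDeriv (fun z : ℂ => z ^ q) w
          + logDeriv (fun z : ℂ => ∏ n ∈ Finset.range N, (1 - z / γ n)) w := h1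
      _ = (q : ℂ) / w + ∑ n ∈ Finset.range N, (w - γ n)⁻¹ := by
          rw [h2, logDeriv_pow]
          congr 1
          exact Finset.sum_congr rfl fun n _ => h3 n
  -- limit of log derivatives is zero
  have hL : Tendsto (fun N => logDeriv (F N) w) atTop (𝓝 0) := by
    have : Tendsto (fun N => deriv (F N) w / F N w) atTop (𝓝 (deriv f w / f w)) :=
      hderivtend.div hFw hwS
    rw [hw, zero_div] at this
    exact this
  -- contradiction via the functional
  set δ : ℝ := Ψ ((w - γ 0)⁻¹) with hδ
  have hδpos : 0 < δ := hΨpos (γ 0) (hγS 0)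
  have hlow : ∀ N, 1 ≤ N → δ ≤ Ψ (logDeriv (F N) w) := by
    intro N hN
    rw [hlogF N, map_add, map_sum]
    have hq0 : 0 ≤ Ψ ((q : ℂ) / w) := by
      rcases Nat.eq_zero_or_pos q with hq | hq
      · simp [hq]
      · have hsm : ((q : ℂ) / w) = (q : ℝ) • w⁻¹ := by
          rw [Complex.real_smul]
          push_cast
          ring
        rw [hsm, map_smul, smul_eq_mul]
        have : 0 < Ψ (w⁻¹) := by
          have := hΨpos 0 (h0S hq.ne')
          simpa using this
        positivity
    have hterm : δ ≤ ∑ n ∈ Finset.range N, Ψ ((w - γ n)⁻¹) := by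
      have h00 : (0:ℕ) ∈ Finset.range N := Finset.mem_range.2 hN
      exact Finset.single_le_sum (f := fun n => Ψ ((w - γ n)⁻¹))
        (fun i _ => le_of_lt (hΨpos (γ i) (hγS i))) h00
    linarith
  have hev : ∀ᶠ N in atTop, Ψ (logDeriv (F N) w) < δ := by
    have hΨtend : Tendsto (fun N => Ψ (logDeriv (F N) w)) atTop (𝓝 (Ψ 0)) :=
      (hΨcont.tendsto 0).comp hL
    rw [map_zero] at hΨtend
    exact hΨtend.eventually_lt_const hδpos
  obtain ⟨N, hN1, hN2⟩ := (hev.and (eventually_ge_atTop 1)).exists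
  exact absurd (hlow N hN2) (not_le.2 hN1)
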